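/- Example 4.7, first part: Let 0 < c < 1/2 and p > 1/(1 − 2c). Define Φ(0) = 0 and Φ(t) = t^p · (1 + c·sin(p·ln t)) for t > 0. Then Φ is an Orlicz function, i.e. it is continuous on [0,∞) (in particular continuous at 0), nondecreasing and convex, with Φ(0) = 0 and lim_{t→∞} Φ(t) = ∞. -/

import Mathlib

open MeasureTheory Filter Set
open scoped ENNReal Topology

/-- An Orlicz function: continuous, nondecreasing and convex on `[0,∞)`,
vanishing at `0` and tending to `∞` at `∞`. -/
structure IsOrliczFunction (Φ : ℝ → ℝ) : Prop where
  continuousOn : ContinuousOn Φ (Set.Ici 0)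
  monotoneOn : MonotoneOn Φ (Set.Ici 0)
  convexOn : ConvexOn ℝ (Set.Ici 0) Φ
  map_zero : Φ 0 = 0
  tendsto_atTop : Tendsto Φ atTop atTop

/-- `M(t, Φ) = sup {Φ(ts)/Φ(s) : s > 0, Φ(s) > 0}`, as a value in `(0, ∞]`. -/
noncomputable def orliczM (Φ : ℝ → ℝ) (t : ℝ) : ℝ≥0∞ :=
  ⨆ s ∈ {s : ℝ | 0 < s ∧ 0 < Φ s}, ENNReal.ofReal (Φ (t * s) / Φ s)

/-- The quantity `log M(t, Φ) / log t`, as an extended real number.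
The index `p_Φ` is its limit as `t → 0⁺`, and `q_Φ` is its limit as `t → ∞`. -/
noncomputable def orliczLogRatio (Φ : ℝ → ℝ) (t : ℝ) : EReal :=
  ENNReal.log (orliczM Φ t) * ((Real.log t)⁻¹ : ℝ)

/-- Example 4.7, first part: for `0 < c < 1/2` and `p > 1/(1 - 2c)`, the
function given by `Φ(0) = 0` and `Φ(t) = t^p (1 + c sin(p ln t))` for `t > 0` is an
Orlicz function. -/
theorem isOrlicz_rpow_mul_one_add_sin (c p : ℝ) (hc0 : 0 < c) (hc : c < 1 / 2)
    (hp : 1 / (1 - 2 * c) < p) :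
    IsOrliczFunction (fun t : ℝ =>
      if t = 0 then 0 else t ^ p * (1 + c * Real.sin (p * Real.log t))) := by
  have h2c : 0 < 1 - 2 * c := by linarith
  have hkey : 1 < p * (1 - 2 * c) := by rwa [div_lt_iff₀ h2c] at hp
  have hp1 : 1 < p := by nlinarith
  have hp0 : 0 < p := by linarith
  set g := fun t : ℝ => t ^ p * (1 + c * Real.sin (p * Real.log t)) with hgdef
  have hg0 : g 0 = 0 := by simp [hgdef, Real.zero_rpow hp0.ne']
  have hfun : (fun t : ℝ =>
      if t = 0 then 0 else t ^ p * (1 + c * Real.sin (p * Real.log t))) = g := by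
    funext t
    by_cases ht : t = 0
    · rw [if_pos ht, ht, hg0]
    · simp [ht, hgdef]
  rw [hfun]
  -- derivative helpers
  have hsin : ∀ t : ℝ, 0 < t → HasDerivAt (fun t : ℝ => Real.sin (p * Real.log t))
      (Real.cos (p * Real.log t) * (p * t⁻¹)) t := fun t ht =>
    HasDerivAt.comp (h₂ := Real.sin) t (Real.hasDerivAt_sin (p * Real.log t)) ((Real.hasDerivAt_log ht.ne').const_mul p)
  have hcos : ∀ t : ℝ, 0 < t → HasDerivAt (fun t : ℝ => Real.cos (p * Real.log t))
      (-Real.sin (p * Real.log t) * (p * t⁻¹)) t := fun t ht =>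
    HasDerivAt.comp (h₂ := Real.cos) t (Real.hasDerivAt_cos (p * Real.log t)) ((Real.hasDerivAt_log ht.ne').const_mul p)
  have hg' : ∀ t : ℝ, 0 < t → HasDerivAt g
      (p * t ^ (p - 1) * (1 + c * Real.sin (p * Real.log t) + c * Real.cos (p * Real.log t))) t := by
    intro t ht
    have h1 : HasDerivAt (fun t : ℝ => t ^ p) (p * t ^ (p - 1)) t :=
      Real.hasDerivAt_rpow_const (Or.inl ht.ne')
    have h2 : HasDerivAt (fun t : ℝ => 1 + c * Real.sin (p * Real.log t))
        (c * (Real.cos (p * Real.log t) * (p * t⁻¹))) t :=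
      ((hsin t ht).const_mul c).const_add 1
    have h3 := h1.mul h2
    refine h3.congr_deriv ?_
    have e5 : t ^ (p - 1) = t ^ p * t⁻¹ := by
      rw [Real.rpow_sub_one ht.ne', div_eq_mul_inv]
    rw [e5]; ring
  -- the second derivative of g, i.e. derivative of the explicit first derivative
  have hg'' : ∀ t : ℝ, 0 < t → HasDerivAt
      (fun t : ℝ => p * t ^ (p - 1) *
        (1 + c * Real.sin (p * Real.log t) + c * Real.cos (p * Real.log t)))
      (p * t ^ (p - 2) *
        ((p - 1) * (1 + c * Real.sin (p * Real.log t) + c * Real.cos (p * Real.log t))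
          + p * c * (Real.cos (p * Real.log t) - Real.sin (p * Real.log t)))) t := by
    intro t ht
    have h1 : HasDerivAt (fun t : ℝ => p * t ^ (p - 1)) (p * ((p - 1) * t ^ (p - 1 - 1))) t :=
      (Real.hasDerivAt_rpow_const (Or.inl ht.ne')).const_mul p
    have h2 : HasDerivAt (fun t : ℝ =>
        1 + c * Real.sin (p * Real.log t) + c * Real.cos (p * Real.log t))
        (c * (Real.cos (p * Real.log t) * (p * t⁻¹))
          + c * (-Real.sin (p * Real.log t) * (p * t⁻¹))) t :=
      (((hsin t ht).const_mul c).const_add 1).add ((hcos t ht).const_mul c)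
    have h3 := h1.mul h2
    refine h3.congr_deriv ?_
    have e1 : t ^ (p - 1 - 1) = t ^ (p - 2) := by
      rw [show p - 1 - 1 = p - 2 from by ring]
    have e5 : t ^ (p - 1) = t ^ (p - 2) * t := by
      rw [← Real.rpow_add_one ht.ne', show p - 2 + 1 = p - 1 from by ring]
    have e6 : t * t⁻¹ = 1 := mul_inv_cancel₀ ht.ne'
    rw [e1, e5]
    field_simp
    ring
  -- positivity facts
  have hA : ∀ t : ℝ, 0 ≤ 1 + c * Real.sin (p * Real.log t) + c * Real.cos (p * Real.log t) := by
    intro t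
    nlinarith [Real.neg_one_le_sin (p * Real.log t), Real.neg_one_le_cos (p * Real.log t)]
  have hE : ∀ t : ℝ, 0 ≤
      (p - 1) * (1 + c * Real.sin (p * Real.log t) + c * Real.cos (p * Real.log t))
        + p * c * (Real.cos (p * Real.log t) - Real.sin (p * Real.log t)) := by
    intro t
    have h1 : 0 ≤ c * (2 * p - 1) * (Real.cos (p * Real.log t) + 1) :=
      mul_nonneg (mul_nonneg hc0.le (by linarith)) (by linarith [Real.neg_one_le_cos (p * Real.log t)])
    have h2 : 0 ≤ c * (1 - Real.sin (p * Real.log t)) :=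
      mul_nonneg hc0.le (by linarith [Real.sin_le_one (p * Real.log t)])
    nlinarith [h1, h2]
  -- continuity
  have hcont : ContinuousOn g (Ici 0) := by
    intro x hx
    rcases (show (0:ℝ) ≤ x from hx).eq_or_lt with rfl | hx'
    · rw [ContinuousWithinAt, hg0]
      have hb : Tendsto (fun t : ℝ => 2 * t ^ p) (𝓝[Ici 0] 0) (𝓝 0) := by
        have h1 : ContinuousAt (fun t : ℝ => t ^ p) 0 :=
          Real.continuousAt_rpow_const 0 p (Or.inr hp0.le)
        have h2 : Tendsto (fun t : ℝ => t ^ p) (𝓝 0) (𝓝 0) := by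
          simpa [Real.zero_rpow hp0.ne'] using h1.tendsto
        simpa using (h2.const_mul 2).mono_left nhdsWithin_le_nhds
      apply squeeze_zero' ?_ ?_ hb
      · filter_upwards [self_mem_nhdsWithin] with t ht
        have ht0 : (0:ℝ) ≤ t := ht
        have h1 : 0 ≤ 1 + c * Real.sin (p * Real.log t) := by
          nlinarith [Real.neg_one_le_sin (p * Real.log t)]
        exact mul_nonneg (Real.rpow_nonneg ht0 p) h1
      · filter_upwards [self_mem_nhdsWithin] with t ht
        have ht0 : (0:ℝ) ≤ t := ht
        have h1 : 1 + c * Real.sin (p * Real.log t) ≤ 2 := by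
          nlinarith [Real.sin_le_one (p * Real.log t)]
        have h2 : 0 ≤ t ^ p := Real.rpow_nonneg ht0 p
        calc g t = t ^ p * (1 + c * Real.sin (p * Real.log t)) := rfl
          _ ≤ t ^ p * 2 := mul_le_mul_of_nonneg_left h1 h2
          _ = 2 * t ^ p := by ring
    · exact ((hg' x hx').differentiableAt.continuousAt).continuousWithinAt
  have hdiff : DifferentiableOn ℝ g (interior (Ici (0:ℝ))) := by
    rw [interior_Ici]
    exact fun x hx => (hg' x hx).differentiableAt.differentiableWithinAt
  have hderiv_eq : ∀ x : ℝ, 0 < x → deriv g x =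
      p * x ^ (p - 1) * (1 + c * Real.sin (p * Real.log x) + c * Real.cos (p * Real.log x)) :=
    fun x hx => (hg' x hx).deriv
  have hmono : MonotoneOn g (Ici 0) := by
    apply monotoneOn_of_deriv_nonneg (convex_Ici 0) hcont hdiff
    rw [interior_Ici]
    intro x hx
    rw [hderiv_eq x hx]
    exact mul_nonneg (mul_nonneg hp0.le (Real.rpow_nonneg hx.le _)) (hA x)
  -- second derivative of g
  have hderiv2 : ∀ x : ℝ, 0 < x → HasDerivAt (deriv g)
      (p * x ^ (p - 2) *
        ((p - 1) * (1 + c * Real.sin (p * Real.log x) + c * Real.cos (p * Real.log x))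
          + p * c * (Real.cos (p * Real.log x) - Real.sin (p * Real.log x)))) x := by
    intro x hx
    apply (hg'' x hx).congr_of_eventuallyEq
    filter_upwards [Ioi_mem_nhds hx] with y hy
    exact hderiv_eq y hy
  have hconv : ConvexOn ℝ (Ici 0) g := by
    apply convexOn_of_deriv2_nonneg (convex_Ici 0) hcont hdiff
    · rw [interior_Ici]
      exact fun x hx => (hderiv2 x hx).differentiableAt.differentiableWithinAt
    · rw [interior_Ici]
      intro x hx
      have h2 : deriv^[2] g x = deriv (deriv g) x := by
        simp [Function.iterate_succ_apply']
      rw [h2, (hderiv2 x hx).deriv]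
      exact mul_nonneg (mul_nonneg hp0.le (Real.rpow_nonneg hx.le _)) (hE x)
  have htop : Tendsto g atTop atTop := by
    have hb : Tendsto (fun t : ℝ => (1 - c) * t ^ p) atTop atTop :=
      (tendsto_rpow_atTop hp0).const_mul_atTop (by linarith)
    apply tendsto_atTop_mono' atTop ?_ hb
    filter_upwards [eventually_ge_atTop (0:ℝ)] with t ht
    have h1 : 1 - c ≤ 1 + c * Real.sin (p * Real.log t) := by
      nlinarith [Real.neg_one_le_sin (p * Real.log t)]
    have h2 : 0 ≤ t ^ p := Real.rpow_nonneg ht p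
    calc (1 - c) * t ^ p = t ^ p * (1 - c) := by ring
      _ ≤ t ^ p * (1 + c * Real.sin (p * Real.log t)) := mul_le_mul_of_nonneg_left h1 h2
  exact ⟨hcont, hmono, hconv, hg0, htop⟩
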